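/- Let λ be a hook-quotient partition of e-weight w with bead movements starting at positions q₁ < ... < q_w, and let λ' be its conjugate, with bead movements starting at q'₁ < ... < q'_w. Then q'ᵢ = 1 - q_{w+1-i} + e for all i ∈ {1, ..., w}. Moreover, writing z(λ) = (z₁,...,z_w) and z(λ') = (z'₁,...,z'_w), one has zᵢ + z'_{w+1-i} = e - [q_i ∈ β(λ)] + [q_i - e ∈ β(λ)], where [·] is 1 if the condition holds and 0 otherwise. -/
import Mathlib


open scoped Classical

/-- The set of β-numbers of a partition given by its (0-indexed) parts function. -/
def betaSet (lam : ℕ → ℕ) : Set ℤ :=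
  {x : ℤ | ∃ i : ℕ, x = (lam i : ℤ) - ((i : ℤ) + 1)}

/-- `wt e B b`: number of unoccupied positions above `b` on its runner. -/
noncomputable def wt (e : ℕ) (B : Set ℤ) (b : ℤ) : ℕ :=
  Set.ncard {x : ℤ | x < b ∧ (e : ℤ) ∣ b - x ∧ x ∉ B}

/-- Every component of the `e`-quotient is a hook. -/
def HookQuotient (e : ℕ) (B : Set ℤ) : Prop :=
  ∀ b b' : ℤ, b ∈ B → b' ∈ B → (e : ℤ) ∣ b - b' →
    2 ≤ wt e B b → 2 ≤ wt e B b' → b = b'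

/-- `x` is the starting position of a bead movement of the partition with bead set
`B`: there is a bead `b ≥ x` on the runner of `x` and an unoccupied position `c < x`
on the runner of `x`. -/
def IsStart (e : ℕ) (B : Set ℤ) (x : ℤ) : Prop :=
  (∃ b, b ∈ B ∧ x ≤ b ∧ (e : ℤ) ∣ b - x) ∧
  (∃ c, c ∉ B ∧ c < x ∧ (e : ℤ) ∣ x - c)

/-- The armlength of a bead movement starting at `q`. -/
noncomputable def zOf (e : ℕ) (B : Set ℤ) (q : ℤ) : ℕ :=
  Set.ncard {t : ℤ | q - e < t ∧ t ≤ q ∧ t ∉ B}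

/-- Starts of the conjugate correspond to starts of the original partition. -/
lemma isStart_conj_iff (e : ℕ) (he : 0 < e) (B : Set ℤ) (x : ℤ) :
    IsStart e {y : ℤ | 1 - y ∉ B} x ↔ IsStart e B (1 - x + e) := by
  constructor
  · rintro ⟨⟨b, hb, hxb, hd⟩, ⟨c, hc, hcx, hd'⟩⟩
    have hc' : 1 - c ∈ B := not_not.mp hc
    have hxc : (e : ℤ) ≤ x - c := Int.le_of_dvd (by omega) hd'
    refine ⟨⟨1 - c, hc', by omega, ?_⟩, ⟨1 - b, hb, by omega, ?_⟩⟩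
    · have h1 : (1 - c) - (1 - x + (e : ℤ)) = (x - c) - e := by ring
      rw [h1]; exact dvd_sub hd' dvd_rfl
    · have h1 : (1 - x + (e : ℤ)) - (1 - b) = (b - x) + e := by ring
      rw [h1]; exact dvd_add hd dvd_rfl
  · rintro ⟨⟨b, hb, hxb, hd⟩, ⟨c, hc, hcx, hd'⟩⟩
    have hce : (e : ℤ) ≤ (1 - x + e) - c := Int.le_of_dvd (by omega) hd'
    refine ⟨⟨1 - c, ?_, by omega, ?_⟩, ⟨1 - b, ?_, by omega, ?_⟩⟩
    · simp only [Set.mem_setOf_eq]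
      have h0 : (1:ℤ) - (1 - c) = c := by ring
      rw [h0]; exact hc
    · have h1 : (1 - c) - x = ((1 - x + (e : ℤ)) - c) - e := by ring
      rw [h1]; exact dvd_sub hd' dvd_rfl
    · simpa using hb
    · have h1 : x - (1 - b) = (b - (1 - x + (e : ℤ))) + e := by ring
      rw [h1]; exact dvd_add hd dvd_rfl

lemma zOf_eq_card (e : ℕ) (B : Set ℤ) (Q : ℤ) :
    zOf e B Q = ((Finset.Ioc (Q - e) Q).filter (fun t => t ∉ B)).card := by
  rw [zOf, ← Set.ncard_coe_finset]
  congr 1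
  ext t
  simp [Finset.mem_Ioc, and_assoc]

theorem stmt_18 (e : ℕ) (he : 2 ≤ e) (w : ℕ) (lam : ℕ → ℕ)
    (hanti : Antitone lam) (hev : ∃ N, ∀ i ≥ N, lam i = 0)
    (hquot : HookQuotient e (betaSet lam))
    (q q' : Fin w → ℤ)
    (hqmono : StrictMono q) (hq'mono : StrictMono q')
    (hqstart : ∀ i, IsStart e (betaSet lam) (q i))
    (hqall : ∀ x, IsStart e (betaSet lam) x → ∃ i, q i = x)
    (hq'start : ∀ i, IsStart e {x : ℤ | 1 - x ∉ betaSet lam} (q' i))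
    (hq'all : ∀ x, IsStart e {x : ℤ | 1 - x ∉ betaSet lam} x → ∃ i, q' i = x) :
    (∀ i : Fin w, q' i = 1 - q (Fin.rev i) + e) ∧
    (∀ i : Fin w,
      (zOf e (betaSet lam) (q i) : ℤ) +
        (zOf e {x : ℤ | 1 - x ∉ betaSet lam} (q' (Fin.rev i)) : ℤ) =
      (e : ℤ) - (if q i ∈ betaSet lam then 1 else 0) +
        (if q i - e ∈ betaSet lam then 1 else 0)) := by
  set B := betaSet lam with hB
  have he0 : 0 < e := by omega
  -- part 1
  have hmono2 : StrictMono (fun i : Fin w => 1 - q (Fin.rev i) + (e : ℤ)) := by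
    intro i j hij
    have : q (Fin.rev j) < q (Fin.rev i) := hqmono (by simpa using hij)
    simpa using by omega
  have hrange : Set.range q' = Set.range (fun i : Fin w => 1 - q (Fin.rev i) + (e : ℤ)) := by
    ext x
    constructor
    · rintro ⟨i, rfl⟩
      have h1 := (isStart_conj_iff e he0 B (q' i)).mp (hq'start i)
      obtain ⟨j, hj⟩ := hqall _ h1
      exact ⟨Fin.rev j, by simp [Fin.rev_rev, hj]; omega⟩
    · rintro ⟨i, rfl⟩
      have h1 : IsStart e {y : ℤ | 1 - y ∉ B} (1 - q (Fin.rev i) + e) := by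
        rw [isStart_conj_iff e he0 B]
        have : 1 - (1 - q (Fin.rev i) + (e : ℤ)) + e = q (Fin.rev i) := by ring
        rw [this]
        exact hqstart _
      obtain ⟨j, hj⟩ := hq'all _ h1
      exact ⟨j, hj⟩
  have key : ∀ i : Fin w, q' i = 1 - q (Fin.rev i) + e := by
    have := (@StrictMono.range_inj (Fin w) ℤ _ _ (inferInstanceAs (WellFoundedLT (Fin w))) _ _ hq'mono hmono2).mp hrange
    exact fun i => congrFun this i
  refine ⟨key, fun i => ?_⟩
  -- part 2
  set Q := q i with hQ
  have hrev : q' (Fin.rev i) = 1 - Q + e := by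
    rw [key (Fin.rev i), Fin.rev_rev]
  have hlt : Q - (e : ℤ) < Q := by omega
  -- rewrite z' as a count over [Q-e, Q)
  have hz' : zOf e {x : ℤ | 1 - x ∉ B} (q' (Fin.rev i))
      = ((Finset.Ico (Q - e) Q).filter (fun s => s ∈ B)).card := by
    rw [hrev, zOf, ← Set.ncard_coe_finset]
    have himg : {t : ℤ | 1 - Q + e - e < t ∧ t ≤ 1 - Q + e ∧ t ∉ {x : ℤ | 1 - x ∉ B}}
        = (fun s : ℤ => 1 - s) '' ↑((Finset.Ico (Q - e) Q).filter (fun s => s ∈ B)) := by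
      ext t
      simp only [Set.mem_image, Finset.coe_filter, Set.mem_setOf_eq, Finset.mem_Ico, not_not]
      constructor
      · rintro ⟨h1, h2, h3⟩
        exact ⟨1 - t, ⟨⟨by omega, by omega⟩, h3⟩, by ring⟩
      · rintro ⟨s, ⟨⟨hs1, hs2⟩, hs3⟩, rfl⟩
        refine ⟨by omega, by omega, by simpa using hs3⟩
    rw [himg, Set.ncard_image_of_injective _ (fun a b h => by omega)]
  rw [hz', zOf_eq_card]
  -- counting
  have hQnot : Q ∉ Finset.Ioo (Q - (e : ℤ)) Q := by simp
  have hQenot : Q - (e : ℤ) ∉ Finset.Ioo (Q - (e : ℤ)) Q := by simp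
  set m := ((Finset.Ioo (Q - (e : ℤ)) Q).filter (fun t => t ∉ B)).card with hm
  set n := ((Finset.Ioo (Q - (e : ℤ)) Q).filter (fun t => t ∈ B)).card with hn
  have hsum : n + m = e - 1 := by
    have h1 := Finset.card_filter_add_card_filter_not
      (s := Finset.Ioo (Q - (e : ℤ)) Q) (p := fun t => t ∈ B)
    have h2 : (Finset.Ioo (Q - (e : ℤ)) Q).card = e - 1 := by
      rw [Int.card_Ioo]
      omega
    omega
  have h2 : ((Finset.Ioc (Q - (e : ℤ)) Q).filter (fun t => t ∉ B)).card
      = m + (if Q ∈ B then 0 else 1) := by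
    rw [← Finset.Ioo_insert_right hlt, Finset.filter_insert]
    split_ifs with h
    · rfl
    · rw [Finset.card_insert_of_notMem (fun hmem => hQnot (Finset.mem_filter.mp hmem).1)]
  have h3 : ((Finset.Ico (Q - (e : ℤ)) Q).filter (fun s => s ∈ B)).card
      = n + (if Q - (e : ℤ) ∈ B then 1 else 0) := by
    rw [← Finset.Ioo_insert_left hlt, Finset.filter_insert]
    split_ifs with h
    · rw [Finset.card_insert_of_notMem (fun hmem => hQenot (Finset.mem_filter.mp hmem).1)]
    · rfl
  rw [h2, h3]
  split_ifs with ha hb hb <;> push_cast <;> omega
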